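/- In the discrete-time controlled chain setting, let ρ > 0 and ψ ∈ C(S) with ψ > 0 satisfy Tψ = ρψ, where Tf(x) := sup_{u∈U} ∫_S e^{r(x,u,y)} f(y) p(dy|x,u). For a Markov kernel φ from S to U (a randomized stationary Markov control), define the linear operator T_φ on C(S) by T_φ f(x) := ∫_U ∫_S e^{r(x,u,y)} f(y) p(dy|x,u) φ(du|x), and define ρ(φ) := exp( sup_{x∈S} limsup_{n→∞} (1/n) log (T_φ^n 𝟙)(x) ), where 𝟙 is the constant function 1. Then log ρ = max over Markov kernels φ from S to U of log ρ(φ); in particular the supremum over φ is attained, establishing the sufficiency of randomized stationary Markov controls. -/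

import Mathlib

open MeasureTheory ProbabilityTheory Filter

/-- The linear operator associated with a randomized stationary Markov control
`φ` in the discrete-time controlled chain setting:
`T_φ f(x) := ∫_U ∫_S e^{r(x,u,y)} f(y) p(dy|x,u) φ(du|x)`. -/
noncomputable def Tcontrol {S U : Type*} [MeasurableSpace S] [MeasurableSpace U]
    (r : S → U → S → ℝ) (p : S → U → Measure S) (φ : Kernel S U)
    (f : S → ℝ) (x : S) : ℝ :=
  ∫ u, ∫ y, Real.exp (r x u y) * f y ∂(p x u) ∂(φ x)

open Topology

set_option maxHeartbeats 1000000


section Aux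

variable {S U : Type*} [MetricSpace S] [CompactSpace S] [Nonempty S]
    [MeasurableSpace S] [BorelSpace S]
    [MetricSpace U] [CompactSpace U] [Nonempty U]
    [MeasurableSpace U] [BorelSpace U]

/-- bounded continuous functions are integrable wrt finite measures -/
lemma myint {f : S → ℝ} (hf : Continuous f) (μ : Measure S) [IsFiniteMeasure μ] :
    Integrable f μ := by
  obtain ⟨q₀, -, hq₀⟩ := isCompact_univ.exists_isMaxOn Set.univ_nonempty
    (hf.abs.continuousOn (s := Set.univ))
  exact (integrable_const (|f q₀|)).mono' hf.aestronglyMeasurable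
    (ae_of_all _ fun y => by simpa using hq₀ (Set.mem_univ y))

lemma cont_integral (p : S → U → Measure S) (hprob : ∀ x u, IsProbabilityMeasure (p x u))
    (hequi : Equicontinuous fun (f : {f : C(S, ℝ) // ‖f‖ ≤ 1}) (xu : S × U) =>
        ∫ y, f.1 y ∂(p xu.1 xu.2))
    (g : S → U → S → ℝ) (hg : Continuous fun q : S × U × S => g q.1 q.2.1 q.2.2) :
    Continuous fun xu : S × U => ∫ y, g xu.1 xu.2 y ∂(p xu.1 xu.2) := by
  -- global bound
  obtain ⟨q₀, -, hq₀⟩ := isCompact_univ.exists_isMaxOn Set.univ_nonempty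
    (hg.abs.continuousOn (s := Set.univ))
  set K : ℝ := |g q₀.1 q₀.2.1 q₀.2.2| + 1 with hK
  have hKpos : 0 < K := by positivity
  have hgK : ∀ x u y, |g x u y| ≤ K := by
    intro x u y
    have h2 : |g x u y| ≤ |g q₀.1 q₀.2.1 q₀.2.2| := hq₀ (Set.mem_univ (x, u, y))
    rw [hK]
    linarith
  have hint : ∀ (x z₁ : S) (u z₂ : U), Integrable (fun y => g z₁ z₂ y) (p x u) := by
    intro x z₁ u z₂
    haveI := hprob x u
    exact myint (hg.comp (continuous_const.prodMk (continuous_const.prodMk continuous_id))) _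
  rw [continuous_iff_continuousAt]
  intro z
  rw [Metric.continuousAt_iff]
  intro ε hε
  -- uniform continuity of g
  have ug := CompactSpace.uniformContinuous_of_continuous hg
  rw [Metric.uniformContinuous_iff] at ug
  obtain ⟨δ₁, hδ₁, hδ₁'⟩ := ug (ε / 4) (by linarith)
  -- equicontinuity
  have he := hequi z {q : ℝ × ℝ | dist q.1 q.2 < ε / (4 * K)}
    (Metric.dist_mem_uniformity (by positivity))
  rw [Metric.eventually_nhds_iff] at he
  obtain ⟨δ₂, hδ₂, hδ₂'⟩ := he
  refine ⟨min δ₁ δ₂, lt_min hδ₁ hδ₂, ?_⟩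
  intro w hw
  haveI := hprob w.1 w.2
  haveI := hprob z.1 z.2
  have hw₁ : dist w z < δ₁ := lt_of_lt_of_le hw (min_le_left _ _)
  have hw₂ : dist w z < δ₂ := lt_of_lt_of_le hw (min_le_right _ _)
  -- term 1 : ∫ g_w dp_w vs ∫ g_z dp_w
  have t1 : |∫ y, g w.1 w.2 y ∂(p w.1 w.2) - ∫ y, g z.1 z.2 y ∂(p w.1 w.2)| ≤ ε / 4 := by
    rw [← integral_sub (hint _ _ _ _) (hint _ _ _ _)]
    calc |∫ y, (g w.1 w.2 y - g z.1 z.2 y) ∂(p w.1 w.2)|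
        ≤ ∫ y, |g w.1 w.2 y - g z.1 z.2 y| ∂(p w.1 w.2) := by
          simpa using norm_integral_le_integral_norm (μ := p w.1 w.2)
            (f := fun y => g w.1 w.2 y - g z.1 z.2 y)
      _ ≤ ∫ _y, (ε / 4) ∂(p w.1 w.2) := by
          apply integral_mono ((hint _ _ _ _).sub (hint _ _ _ _)).abs (integrable_const _)
          intro y
          have hd : dist ((w.1, w.2, y) : S × U × S) (z.1, z.2, y) < δ₁ := by
            have hw₁' := hw₁
            simp only [Prod.dist_eq, dist_self, max_lt_iff] at hw₁' ⊢
            exact ⟨hw₁'.1, hw₁'.2, hδ₁⟩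
          have := hδ₁' hd
          rw [Real.dist_eq] at this
          exact le_of_lt this
      _ = ε / 4 := by simp
  -- term 2
  have t2 : |∫ y, g z.1 z.2 y ∂(p w.1 w.2) - ∫ y, g z.1 z.2 y ∂(p z.1 z.2)| < ε / 2 := by
    set f : C(S, ℝ) := ⟨fun y => K⁻¹ * g z.1 z.2 y, continuous_const.mul
      (hg.comp (continuous_const.prodMk (continuous_const.prodMk continuous_id)))⟩ with hf
    have hfn : ‖f‖ ≤ 1 := by
      apply ContinuousMap.norm_le _ zero_le_one |>.mpr
      intro y
      simp only [hf, ContinuousMap.coe_mk, Real.norm_eq_abs, abs_mul, abs_inv,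
        abs_of_pos hKpos]
      rw [inv_mul_le_iff₀ hKpos, mul_one]
      exact hgK _ _ _
    have := hδ₂' (by simpa [dist_comm] using hw₂) ⟨f, hfn⟩
    simp only [Set.mem_setOf_eq, Real.dist_eq] at this
    have hrw : ∀ (a : S) (b : U), ∫ y, g z.1 z.2 y ∂(p a b) = K * ∫ y, f y ∂(p a b) := by
      intro a b
      rw [← integral_const_mul]
      congr 1 with y
      show g z.1 z.2 y = K * (K⁻¹ * g z.1 z.2 y)
      rw [← mul_assoc, mul_inv_cancel₀ hKpos.ne', one_mul]
    rw [hrw, hrw, ← mul_sub, abs_mul, abs_of_pos hKpos, abs_sub_comm]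
    calc K * |∫ y, f y ∂(p z.1 z.2) - ∫ y, f y ∂(p w.1 w.2)|
        < K * (ε / (4 * K)) := mul_lt_mul_of_pos_left this hKpos
      _ = ε / 4 := by field_simp
      _ < ε / 2 := by linarith
  rw [Real.dist_eq]
  calc |(∫ y, g w.1 w.2 y ∂(p w.1 w.2)) - ∫ y, g z.1 z.2 y ∂(p z.1 z.2)|
      ≤ |∫ y, g w.1 w.2 y ∂(p w.1 w.2) - ∫ y, g z.1 z.2 y ∂(p w.1 w.2)|
        + |∫ y, g z.1 z.2 y ∂(p w.1 w.2) - ∫ y, g z.1 z.2 y ∂(p z.1 z.2)| := abs_sub_le _ _ _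
    _ < ε := by linarith

end Aux

section B
variable {S U : Type*} [MetricSpace S] [CompactSpace S] [Nonempty S]
    [MeasurableSpace S] [BorelSpace S]
    [MetricSpace U] [CompactSpace U] [Nonempty U]
    [MeasurableSpace U] [BorelSpace U]

set_option linter.unusedSectionVars false

lemma kernel_meas (p : S → U → Measure S) (hprob : ∀ x u, IsProbabilityMeasure (p x u))
    (hequi : Equicontinuous fun (f : {f : C(S, ℝ) // ‖f‖ ≤ 1}) (xu : S × U) =>
        ∫ y, f.1 y ∂(p xu.1 xu.2)) :
    Measurable fun xu : S × U => p xu.1 xu.2 := by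
  apply Measure.measurable_of_measurable_coe
  have h_eq : ‹MeasurableSpace S› = MeasurableSpace.generateFrom {A : Set S | IsClosed A} := by
    rw [BorelSpace.measurable_eq (α := S)]; exact borel_eq_generateFrom_isClosed
  have h_inter : IsPiSystem {A : Set S | IsClosed A} :=
    fun A hA B hB _ => hA.inter hB
  refine MeasurableSpace.induction_on_inter
    (C := fun A _ => Measurable fun xu : S × U => p xu.1 xu.2 A) h_eq h_inter ?_ ?_ ?_ ?_
  · simp only [measure_empty]; exact measurable_const
  · intro A hA
    rcases Set.eq_empty_or_nonempty A with rfl | hAne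
    · simp only [measure_empty]; exact measurable_const
    have hAc : IsClosed A := hA
    -- approximating continuous functions
    set fk : ℕ → S → ℝ := fun k y => max 0 (1 - k * Metric.infDist y A) with hfk
    have hfkc : ∀ k, Continuous (fk k) :=
      fun k => continuous_const.max (continuous_const.sub
        (continuous_const.mul (Metric.continuous_infDist_pt A)))
    have hfk01 : ∀ k y, 0 ≤ fk k y ∧ fk k y ≤ 1 := by
      intro k y
      refine ⟨le_max_left _ _, max_le zero_le_one ?_⟩
      have h1 : 0 ≤ (k : ℝ) * Metric.infDist y A :=
        mul_nonneg (Nat.cast_nonneg k) Metric.infDist_nonneg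
      linarith
    have hlim : ∀ y, Tendsto (fun k => fk k y) atTop (𝓝 (Set.indicator A (fun _ => (1:ℝ)) y)) := by
      intro y
      by_cases hy : y ∈ A
      · have : ∀ k, fk k y = 1 := by
          intro k
          simp [hfk, Metric.infDist_zero_of_mem hy]
        rw [Set.indicator_of_mem hy]
        simpa [this] using tendsto_const_nhds
      · have hd : 0 < Metric.infDist y A := (hAc.notMem_iff_infDist_pos hAne).mp hy
        rw [Set.indicator_of_notMem hy]
        apply Tendsto.congr' _ (tendsto_const_nhds (x := (0:ℝ)))
        filter_upwards [eventually_ge_atTop (⌈(Metric.infDist y A)⁻¹⌉₊)] with k hk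
        have : (1:ℝ) ≤ k * Metric.infDist y A := by
          rw [← div_le_iff₀ hd, one_div]
          exact (Nat.le_ceil _).trans (by exact_mod_cast hk)
        simp only [hfk]
        rw [eq_comm, max_eq_left]
        linarith
    -- convergence of integrals
    have hconv : ∀ xu : S × U, Tendsto (fun k => ∫ y, fk k y ∂(p xu.1 xu.2)) atTop
        (𝓝 ((p xu.1 xu.2 A).toReal)) := by
      intro xu
      haveI := hprob xu.1 xu.2
      have : (p xu.1 xu.2 A).toReal = ∫ y, Set.indicator A (fun _ => (1:ℝ)) y ∂(p xu.1 xu.2) := by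
        rw [← measureReal_def, ← integral_indicator_one hAc.measurableSet]; rfl
      rw [this]
      apply tendsto_integral_of_dominated_convergence (bound := fun _ => (1:ℝ))
      · exact fun k => (hfkc k).aestronglyMeasurable
      · exact integrable_const 1
      · intro k
        exact ae_of_all _ fun y => by
          rw [Real.norm_eq_abs, abs_of_nonneg (hfk01 k y).1]; exact (hfk01 k y).2
      · exact ae_of_all _ fun y => hlim y
    have hmeasR : Measurable fun xu : S × U => (p xu.1 xu.2 A).toReal := by
      apply measurable_of_tendsto_metrizable' atTop
        (f := fun k (xu : S × U) => ∫ y, fk k y ∂(p xu.1 xu.2))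
      · intro k
        exact (cont_integral p hprob hequi (fun _ _ y => fk k y)
          ((hfkc k).comp (continuous_snd.comp continuous_snd))).measurable
      · rw [tendsto_pi_nhds]
        exact hconv
    have : (fun xu : S × U => p xu.1 xu.2 A)
        = fun xu => ENNReal.ofReal ((p xu.1 xu.2 A).toReal) := by
      funext xu
      haveI := hprob xu.1 xu.2
      rw [ENNReal.ofReal_toReal (measure_ne_top _ _)]
    rw [this]
    exact ENNReal.measurable_ofReal.comp hmeasR
  · intro A hA hCA
    have : (fun xu : S × U => p xu.1 xu.2 Aᶜ)
        = fun xu => 1 - p xu.1 xu.2 A := by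
      funext xu
      haveI := hprob xu.1 xu.2
      rw [measure_compl hA (measure_ne_top _ _), measure_univ]
    rw [this]
    exact measurable_const.sub hCA
  · intro f hdisj hmeas hC
    have : (fun xu : S × U => p xu.1 xu.2 (⋃ i, f i))
        = fun xu => ∑' i, p xu.1 xu.2 (f i) := by
      funext xu
      exact measure_iUnion hdisj hmeas
    rw [this]
    exact Measurable.ennreal_tsum hC

end B



section C
set_option linter.unusedSectionVars false
variable {S U : Type*} [MetricSpace S] [CompactSpace S] [Nonempty S]
    [MeasurableSpace S] [BorelSpace S]
    [MetricSpace U] [CompactSpace U] [Nonempty U]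
    [MeasurableSpace U] [BorelSpace U]

lemma sup_cont {K : Type*} [MetricSpace K] [CompactSpace K] [Nonempty K]
    (G : S × K → ℝ) (hG : Continuous G) :
    Continuous fun x : S => ⨆ u, G (x, u) := by
  obtain ⟨q₀, -, hq₀⟩ := isCompact_univ.exists_isMaxOn Set.univ_nonempty
    (hG.continuousOn (s := Set.univ))
  have hbdd : ∀ x : S, BddAbove (Set.range fun u : K => G (x, u)) := fun x =>
    ⟨G q₀, by rintro _ ⟨u, rfl⟩; exact hq₀ (Set.mem_univ (x, u))⟩
  rw [Metric.continuous_iff]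
  intro b ε hε
  have ug := CompactSpace.uniformContinuous_of_continuous hG
  rw [Metric.uniformContinuous_iff] at ug
  obtain ⟨δ, hδ, hδ'⟩ := ug (ε/2) (by linarith)
  have key : ∀ a c : S, dist a c < δ → (⨆ u, G (a, u)) ≤ (⨆ u, G (c, u)) + ε/2 := by
    intro a c hac
    apply ciSup_le
    intro u
    have hd : dist ((a, u) : S × K) (c, u) < δ := by
      simp only [Prod.dist_eq, dist_self, max_lt_iff]
      exact ⟨hac, hδ⟩
    have h2 := hδ' hd
    rw [Real.dist_eq] at h2
    have h3 := (abs_sub_lt_iff.mp h2).1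
    have h4 : G (a, u) ≤ G (c, u) + ε/2 := by linarith
    exact h4.trans (add_le_add (le_ciSup (hbdd c) u) le_rfl)
  refine ⟨δ, hδ, fun a hab => ?_⟩
  rw [Real.dist_eq, abs_sub_lt_iff]
  have k1 := key a b hab
  have k2 := key b a (by rwa [dist_comm])
  constructor <;> linarith

lemma exists_meas_argmax (G : S × U → ℝ) (hG : Continuous G) :
    ∃ s : S → U, Measurable s ∧ ∀ x u, G (x, u) ≤ G (x, s x) := by
  classical
  obtain ⟨q₀, -, hq₀⟩ := isCompact_univ.exists_isMaxOn Set.univ_nonempty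
    (hG.continuousOn (s := Set.univ))
  have hbdd : ∀ x : S, BddAbove (Set.range fun u : U => G (x, u)) := fun x =>
    ⟨G q₀, by rintro _ ⟨u, rfl⟩; exact hq₀ (Set.mem_univ (x, u))⟩
  have hGx : ∀ x : S, Continuous fun u : U => G (x, u) :=
    fun x => hG.comp (continuous_const.prodMk continuous_id)
  -- existence of maximizers
  have h_attain : ∀ x : S, ∃ u : U, ∀ w, G (x, w) ≤ G (x, u) := by
    intro x
    obtain ⟨u, -, hu⟩ := isCompact_univ.exists_isMaxOn Set.univ_nonempty
      ((hGx x).continuousOn (s := Set.univ))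
    exact ⟨u, fun w => hu (Set.mem_univ w)⟩
  -- measurability of approximate argmax sets
  have hE_meas : ∀ (v : U) (t : ℝ), 0 ≤ t →
      MeasurableSet {x : S | ∃ u, (∀ w, G (x, w) ≤ G (x, u)) ∧ dist u v ≤ t} := by
    intro v t ht
    haveI : Nonempty (Metric.closedBall v t) := ⟨⟨v, Metric.mem_closedBall_self ht⟩⟩
    haveI : CompactSpace (Metric.closedBall v t) :=
      isCompact_iff_compactSpace.mp (Metric.isClosed_closedBall.isCompact)
    have hbddB : ∀ x : S,
        BddAbove (Set.range fun u : Metric.closedBall v t => G (x, u.1)) := fun x =>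
      ⟨G q₀, by rintro _ ⟨u, rfl⟩; exact hq₀ (Set.mem_univ (x, u.1))⟩
    have hset : {x : S | ∃ u, (∀ w, G (x, w) ≤ G (x, u)) ∧ dist u v ≤ t}
        = {x : S | (⨆ u : Metric.closedBall v t, G (x, u.1)) = ⨆ u : U, G (x, u)} := by
      ext x
      simp only [Set.mem_setOf_eq]
      constructor
      · rintro ⟨u, hu, huv⟩
        apply le_antisymm
        · exact ciSup_le fun w => le_ciSup (hbdd x) w.1
        · refine ciSup_le fun w => ?_
          exact (hu w).trans (le_ciSup (hbddB x) ⟨u, Metric.mem_closedBall.mpr huv⟩)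
      · intro heq
        -- sup over the ball is attained
        obtain ⟨u₀, -, hu₀⟩ := isCompact_univ.exists_isMaxOn
          (Set.univ_nonempty (α := Metric.closedBall v t))
          (((hGx x).comp continuous_subtype_val).continuousOn (s := Set.univ))
        have hsup : (⨆ u : Metric.closedBall v t, G (x, u.1)) = G (x, u₀.1) := by
          apply le_antisymm
          · exact ciSup_le fun w => hu₀ (Set.mem_univ w)
          · exact le_ciSup (hbddB x) u₀
        refine ⟨u₀.1, fun w => ?_, Metric.mem_closedBall.mp u₀.2⟩
        calc G (x, w) ≤ ⨆ u : U, G (x, u) := le_ciSup (hbdd x) w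
          _ = G (x, u₀.1) := by rw [← heq, hsup]
    rw [hset]
    have c1 : Continuous fun x : S => ⨆ u : Metric.closedBall v t, G (x, u.1) :=
      sup_cont (fun q : S × Metric.closedBall v t => G (q.1, q.2.1))
        (hG.comp (continuous_fst.prodMk (continuous_subtype_val.comp continuous_snd)))
    have c2 : Continuous fun x : S => ⨆ u : U, G (x, u) := sup_cont G hG
    exact (isClosed_eq c1 c2).measurableSet
  -- dense sequence
  haveI : TopologicalSpace.SeparableSpace U := by
    obtain ⟨c, hc, hsub⟩ := isCompact_univ.isSeparable (α := U)
    exact ⟨⟨c, hc, dense_iff_closure_eq.mpr (Set.eq_univ_of_univ_subset hsub)⟩⟩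
  set D : ℕ → U := TopologicalSpace.denseSeq U with hD
  have hDd : DenseRange D := TopologicalSpace.denseRange_denseSeq U
  have hDapprox : ∀ (u : U) (ε : ℝ), 0 < ε → ∃ k, dist u (D k) ≤ ε := by
    intro u ε hε
    have := Metric.mem_closure_iff.mp (hDd.closure_eq ▸ Set.mem_univ u : u ∈ closure (Set.range D)) ε hε
    obtain ⟨b, ⟨k, rfl⟩, hb⟩ := this
    exact ⟨k, hb.le⟩
  have hr : ∀ m : ℕ, (0:ℝ) < 2⁻¹ ^ m := fun m => by positivity
  -- one-step improvement
  have hstep : ∀ (m : ℕ) (f : S → U), Measurable f →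
      (∀ x, ∃ u, (∀ w, G (x, w) ≤ G (x, u)) ∧ dist u (f x) ≤ 2⁻¹ ^ m) →
      ∃ g : S → U, Measurable g ∧
        (∀ x, ∃ u, (∀ w, G (x, w) ≤ G (x, u)) ∧ dist u (g x) ≤ 2⁻¹ ^ (m+1)) ∧
        (∀ x, dist (g x) (f x) ≤ 2 * 2⁻¹ ^ m) := by
    intro m f hfm hinv
    set ppred : ℕ → S → Prop := fun k x =>
      (∃ u, (∀ w, G (x, w) ≤ G (x, u)) ∧ dist u (D k) ≤ 2⁻¹ ^ (m+1)) ∧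
      dist (D k) (f x) ≤ 2⁻¹ ^ m + 2⁻¹ ^ (m+1) with hppred
    have hex : ∀ x, ∃ k, ppred k x := by
      intro x
      obtain ⟨u, hu, hud⟩ := hinv x
      obtain ⟨k, hk⟩ := hDapprox u (2⁻¹ ^ (m+1)) (hr (m+1))
      refine ⟨k, ⟨u, hu, hk⟩, ?_⟩
      calc dist (D k) (f x) ≤ dist (D k) u + dist u (f x) := dist_triangle _ _ _
        _ ≤ 2⁻¹ ^ (m+1) + 2⁻¹ ^ m := by rw [dist_comm u (D k)] at hk; linarith
        _ = 2⁻¹ ^ m + 2⁻¹ ^ (m+1) := by ring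
    have hpm : ∀ k, MeasurableSet {x | ppred k x} := by
      intro k
      have e1 : {x | ppred k x} =
          {x : S | ∃ u, (∀ w, G (x, w) ≤ G (x, u)) ∧ dist u (D k) ≤ 2⁻¹ ^ (m+1)}
          ∩ f ⁻¹' {u : U | dist (D k) u ≤ 2⁻¹ ^ m + 2⁻¹ ^ (m+1)} := rfl
      rw [e1]
      refine (hE_meas (D k) _ (hr (m+1)).le).inter (hfm ?_)
      exact (isClosed_le (continuous_const.dist continuous_id) continuous_const).measurableSet
    refine ⟨fun x => D (Nat.find (hex x)), ?_, ?_, ?_⟩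
    · exact Measurable.find (f := fun k (_ : S) => D k) (fun k => measurable_const) hpm hex
    · intro x
      exact (Nat.find_spec (hex x)).1
    · intro x
      have h2 := (Nat.find_spec (hex x)).2
      have : (2⁻¹:ℝ) ^ (m+1) ≤ 2⁻¹ ^ m := by
        apply pow_le_pow_of_le_one (by norm_num) (by norm_num)
        omega
      linarith
  -- base selector
  have hbase : ∃ f : S → U, Measurable f ∧
      ∀ x, ∃ u, (∀ w, G (x, w) ≤ G (x, u)) ∧ dist u (f x) ≤ 2⁻¹ ^ 0 := by
    set ppred : ℕ → S → Prop := fun k x =>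
      ∃ u, (∀ w, G (x, w) ≤ G (x, u)) ∧ dist u (D k) ≤ 2⁻¹ ^ 0 with hppred
    have hex : ∀ x, ∃ k, ppred k x := by
      intro x
      obtain ⟨u, hu⟩ := h_attain x
      obtain ⟨k, hk⟩ := hDapprox u (2⁻¹ ^ 0) (hr 0)
      exact ⟨k, u, hu, hk⟩
    refine ⟨fun x => D (Nat.find (hex x)), ?_, fun x => Nat.find_spec (hex x)⟩
    exact Measurable.find (f := fun k (_ : S) => D k) (fun k => measurable_const)
      (fun k => hE_meas (D k) _ (hr 0).le) hex
  obtain ⟨f₀, hf₀m, hf₀⟩ := hbase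
  choose step hstep₁ hstep₂ hstep₃ using hstep
  -- the recursive sequence of selectors
  let F : (m : ℕ) → {f : S → U // Measurable f ∧
      ∀ x, ∃ u, (∀ w, G (x, w) ≤ G (x, u)) ∧ dist u (f x) ≤ 2⁻¹ ^ m} := fun m =>
    Nat.rec ⟨f₀, hf₀m, hf₀⟩
      (fun m fm => ⟨step m fm.1 fm.2.1 fm.2.2,
        hstep₁ m fm.1 fm.2.1 fm.2.2, hstep₂ m fm.1 fm.2.1 fm.2.2⟩) m
  have hFc : ∀ m x, dist ((F (m+1)).1 x) ((F m).1 x) ≤ 2 * 2⁻¹ ^ m := by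
    intro m x
    exact hstep₃ m (F m).1 (F m).2.1 (F m).2.2 x
  have hcauchy : ∀ x, ∃ u : U, Tendsto (fun m => (F m).1 x) atTop (𝓝 u) := by
    intro x
    apply cauchySeq_tendsto_of_complete
    apply cauchySeq_of_le_geometric 2⁻¹ 2 (by norm_num)
    intro m
    rw [dist_comm]
    exact hFc m x
  choose s hs using hcauchy
  refine ⟨s, ?_, ?_⟩
  · exact measurable_of_tendsto_metrizable' atTop (fun m => (F m).2.1)
      (tendsto_pi_nhds.mpr hs)
  · intro x
    have hclosed : IsClosed {u : U | ∀ w, G (x, w) ≤ G (x, u)} := by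
      have : {u : U | ∀ w, G (x, w) ≤ G (x, u)} = ⋂ w, {u | G (x, w) ≤ G (x, u)} := by
        ext u; simp
      rw [this]
      exact isClosed_iInter fun w => isClosed_le continuous_const (hGx x)
    suffices hmem : s x ∈ {u : U | ∀ w, G (x, w) ≤ G (x, u)} by
      exact fun u => hmem u
    rw [← hclosed.closure_eq]
    rw [Metric.mem_closure_iff]
    intro ε hε
    -- choose m with 2⁻¹^m small and F m x close to s x
    obtain ⟨N₁, hN₁⟩ := (Metric.tendsto_atTop.mp (hs x)) (ε/3) (by linarith)
    have hpow : Tendsto (fun m : ℕ => (2:ℝ)⁻¹ ^ m) atTop (𝓝 0) :=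
      tendsto_pow_atTop_nhds_zero_of_lt_one (by norm_num) (by norm_num)
    obtain ⟨N₂, hN₂⟩ := (Metric.tendsto_atTop.mp hpow) (ε/3) (by linarith)
    set m := max N₁ N₂
    obtain ⟨u, hu, hud⟩ := (F m).2.2 x
    refine ⟨u, hu, ?_⟩
    have h1 := hN₁ m (le_max_left _ _)
    have h2 := hN₂ m (le_max_right _ _)
    rw [Real.dist_eq] at h2
    have h2' : (2:ℝ)⁻¹ ^ m < ε/3 := by
      have := le_abs_self ((2:ℝ)⁻¹ ^ m - 0)
      simp only [sub_zero] at h2 this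
      linarith [abs_nonneg ((2:ℝ)⁻¹ ^ m)]
    have hd1 : dist (s x) ((F m).1 x) < ε/3 := by rw [dist_comm]; exact h1
    have hd2 : dist ((F m).1 x) u < ε/3 := by
      rw [dist_comm]; exact lt_of_le_of_lt hud h2'
    calc dist (s x) u ≤ dist (s x) ((F m).1 x) + dist ((F m).1 x) u := dist_triangle _ _ _
      _ < ε := by linarith

end C

/-- **Sufficiency of randomized stationary Markov controls.**
In the discrete-time controlled chain setting, let `ρ > 0` and everywhere
positive `ψ ∈ C(S)` satisfy `Tψ = ρψ`.  For a Markov kernel `φ` from `S` to `U`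
define `ρ(φ) := exp( sup_{x∈S} limsup_n (1/n) log (T_φ^n 𝟙)(x) )`.  Then
`log ρ` is the **maximum** over all Markov kernels `φ` of `log ρ(φ)`; in
particular the supremum over `φ` is attained. -/
theorem sufficiency_of_markov_controls
    {S U : Type*} [MetricSpace S] [CompactSpace S] [Nonempty S]
    [MeasurableSpace S] [BorelSpace S]
    [MetricSpace U] [CompactSpace U] [Nonempty U]
    [MeasurableSpace U] [BorelSpace U]
    (r : S → U → S → ℝ)
    (hr : Continuous fun q : S × U × S => r q.1 q.2.1 q.2.2)
    (p : S → U → Measure S)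
    (hprob : ∀ x u, IsProbabilityMeasure (p x u))
    (hsupp : ∀ x u, ∀ O : Set S, IsOpen O → O.Nonempty → 0 < p x u O)
    (hequi : Equicontinuous fun (f : {f : C(S, ℝ) // ‖f‖ ≤ 1}) (xu : S × U) =>
        ∫ y, f.1 y ∂(p xu.1 xu.2))
    (T : (S → ℝ) → S → ℝ)
    (hT : ∀ (f : S → ℝ) (x : S),
        T f x = ⨆ u : U, ∫ y, Real.exp (r x u y) * f y ∂(p x u))
    (ρ : ℝ) (hρ : 0 < ρ) (ψ : C(S, ℝ)) (hψ : ∀ x, 0 < ψ x)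
    (heig : ∀ x, T ψ x = ρ * ψ x) :
    IsGreatest
      {c : ℝ | ∃ φ : Kernel S U, IsMarkovKernel φ ∧
        c = Real.log (Real.exp (⨆ x : S, limsup
              (fun n : ℕ => (1 / (n : ℝ)) *
                Real.log ((Tcontrol r p φ)^[n] (fun _ => 1) x)) atTop))}
      (Real.log ρ) := by
  classical
  haveI : MeasurableSingletonClass U := ⟨fun u => isClosed_singleton.measurableSet⟩
  -- bounds on exp r
  obtain ⟨qm, -, hqm⟩ := isCompact_univ.exists_isMinOn Set.univ_nonempty
    (hr.continuousOn (s := Set.univ))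
  obtain ⟨qM, -, hqM⟩ := isCompact_univ.exists_isMaxOn Set.univ_nonempty
    (hr.continuousOn (s := Set.univ))
  set ε₀ : ℝ := Real.exp (r qm.1 qm.2.1 qm.2.2) with hε₀
  set E₁ : ℝ := Real.exp (r qM.1 qM.2.1 qM.2.2) with hE₁
  have hε₀pos : 0 < ε₀ := Real.exp_pos _
  have hrlow : ∀ x u y, ε₀ ≤ Real.exp (r x u y) := fun x u y =>
    Real.exp_le_exp.mpr (hqm (Set.mem_univ ((x, u, y) : S × U × S)))
  have hrhigh : ∀ x u y, Real.exp (r x u y) ≤ E₁ := fun x u y =>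
    Real.exp_le_exp.mpr (hqM (Set.mem_univ ((x, u, y) : S × U × S)))
  -- ψ bounds
  obtain ⟨xm, -, hxm⟩ := isCompact_univ.exists_isMinOn Set.univ_nonempty
    (ψ.continuous.continuousOn (s := Set.univ))
  obtain ⟨xM, -, hxM⟩ := isCompact_univ.exists_isMaxOn Set.univ_nonempty
    (ψ.continuous.continuousOn (s := Set.univ))
  set mψ : ℝ := ψ xm with hmψdef
  set Mψ : ℝ := ψ xM with hMψdef
  have hmψ : 0 < mψ := hψ xm
  have hMψ : 0 < Mψ := hψ xM
  have hψle : ∀ x, mψ ≤ ψ x := fun x => hxm (Set.mem_univ x)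
  have hψge : ∀ x, ψ x ≤ Mψ := fun x => hxM (Set.mem_univ x)
  -- the reward-eigenfunction integral
  set Gψ : S × U → ℝ := fun xu => ∫ y, Real.exp (r xu.1 xu.2 y) * ψ y ∂(p xu.1 xu.2) with hGψdef
  have hGψc : Continuous Gψ :=
    cont_integral p hprob hequi (fun x u y => Real.exp (r x u y) * ψ y)
      ((Real.continuous_exp.comp hr).mul (ψ.continuous.comp (continuous_snd.comp continuous_snd)))
  have hbddG : ∀ x, BddAbove (Set.range fun u : U => Gψ (x, u)) := by
    intro x
    obtain ⟨q₁, -, hq₁⟩ := isCompact_univ.exists_isMaxOn Set.univ_nonempty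
      (hGψc.continuousOn (s := Set.univ))
    exact ⟨Gψ q₁, by rintro _ ⟨u, rfl⟩; exact hq₁ (Set.mem_univ (x, u))⟩
  have hsup : ∀ x, (⨆ u : U, Gψ (x, u)) = ρ * ψ x := fun x => (hT ψ x).symm.trans (heig x)
  have hGle : ∀ x u, Gψ (x, u) ≤ ρ * ψ x := fun x u => (le_ciSup (hbddG x) u).trans (hsup x).le
  -- the transition kernel
  set κ : Kernel (S × U) S := ⟨fun xu => p xu.1 xu.2, kernel_meas p hprob hequi⟩ with hκdef
  haveI : IsMarkovKernel κ := ⟨fun xu => hprob xu.1 xu.2⟩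
  -- iteration bounds for arbitrary Markov kernels
  have key : ∀ (φ : Kernel S U), IsMarkovKernel φ → ∀ n : ℕ,
      Measurable ((Tcontrol r p φ)^[n] (fun _ => (1:ℝ))) ∧
      (∀ x, ε₀ ^ n ≤ (Tcontrol r p φ)^[n] (fun _ => (1:ℝ)) x) ∧
      (∀ x, (Tcontrol r p φ)^[n] (fun _ => (1:ℝ)) x ≤ ρ ^ n * ψ x / mψ) := by
    intro φ hφ
    haveI := hφ
    intro n
    induction n with
    | zero =>
      refine ⟨measurable_const, fun x => by simp, fun x => ?_⟩
      simp only [Function.iterate_zero, id_eq, pow_zero, one_mul]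
      rw [le_div_iff₀ hmψ, one_mul]
      exact hψle x
    | succ n ih =>
      obtain ⟨hm, hlow, hup⟩ := ih
      set f := (Tcontrol r p φ)^[n] (fun _ => (1:ℝ)) with hfdef
      have hfnn : ∀ y, 0 ≤ f y := fun y => le_trans (by positivity) (hlow y)
      have hfub : ∀ y, f y ≤ ρ ^ n * Mψ / mψ := fun y => (hup y).trans (by
        gcongr
        exact hψge y)
      set H : S × U → ℝ := fun xu => ∫ y, Real.exp (r xu.1 xu.2 y) * f y ∂(p xu.1 xu.2) with hHdef
      have hHm : StronglyMeasurable H := by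
        have hc : Continuous fun q : (S × U) × S => Real.exp (r q.1.1 q.1.2 q.2) :=
          Real.continuous_exp.comp (hr.comp
            ((continuous_fst.comp continuous_fst).prodMk
              ((continuous_snd.comp continuous_fst).prodMk continuous_snd)))
        have hFm : StronglyMeasurable (Function.uncurry fun (xu : S × U) (y : S) =>
            Real.exp (r xu.1 xu.2 y) * f y) :=
          (hc.measurable.mul (hm.comp measurable_snd)).stronglyMeasurable
        exact hFm.integral_kernel_prod_right (κ := κ)
      have hint1 : ∀ x u, Integrable (fun y => Real.exp (r x u y) * f y) (p x u) := by
        intro x u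
        haveI := hprob x u
        have hcm : Measurable fun y => Real.exp (r x u y) * f y := by
          have : Continuous fun y : S => Real.exp (r x u y) :=
            Real.continuous_exp.comp (hr.comp
              (continuous_const.prodMk (continuous_const.prodMk continuous_id)))
          exact this.measurable.mul hm
        refine (integrable_const (E₁ * (ρ ^ n * Mψ / mψ))).mono'
          hcm.aestronglyMeasurable (ae_of_all _ fun y => ?_)
        rw [Real.norm_eq_abs, abs_mul, abs_of_pos (Real.exp_pos _), abs_of_nonneg (hfnn y)]
        exact mul_le_mul (hrhigh x u y) (hfub y) (hfnn y) ((Real.exp_pos _).le.trans (hrhigh x u y))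
      have hHlow : ∀ x u, ε₀ ^ (n+1) ≤ H (x, u) := by
        intro x u
        haveI := hprob x u
        have hmono := integral_mono (μ := p x u) (integrable_const (ε₀ * ε₀ ^ n)) (hint1 x u)
          (fun y => mul_le_mul (hrlow x u y) (hlow y) (by positivity) (hε₀pos.le.trans (hrlow x u y)))
        rw [integral_const] at hmono
        simp only [probReal_univ, smul_eq_mul, one_mul] at hmono
        calc ε₀ ^ (n+1) = ε₀ * ε₀ ^ n := by ring
          _ ≤ H (x, u) := hmono
      have hHup : ∀ x u, H (x, u) ≤ ρ ^ (n+1) * ψ x / mψ := by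
        intro x u
        haveI := hprob x u
        have hcψ : Continuous fun y => Real.exp (r x u y) * ψ y := by
          have : Continuous fun y : S => Real.exp (r x u y) :=
            Real.continuous_exp.comp (hr.comp
              (continuous_const.prodMk (continuous_const.prodMk continuous_id)))
          exact this.mul ψ.continuous
        have hint2 : Integrable (fun y => ρ ^ n / mψ * (Real.exp (r x u y) * ψ y)) (p x u) :=
          (myint hcψ _).const_mul _
        have hmono := integral_mono (hint1 x u) hint2 (fun y => by
          calc Real.exp (r x u y) * f y ≤ Real.exp (r x u y) * (ρ ^ n * ψ y / mψ) := by
                have := hup y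
                gcongr
            _ = ρ ^ n / mψ * (Real.exp (r x u y) * ψ y) := by ring)
        rw [integral_const_mul] at hmono
        calc H (x, u) ≤ ρ ^ n / mψ * Gψ (x, u) := hmono
          _ ≤ ρ ^ n / mψ * (ρ * ψ x) := by
              have := hGle x u
              gcongr
          _ = ρ ^ (n+1) * ψ x / mψ := by ring
      have hiter : ∀ x, (Tcontrol r p φ)^[n+1] (fun _ => (1:ℝ)) x = ∫ u, H (x, u) ∂(φ x) := by
        intro x
        rw [Function.iterate_succ_apply']
        rfl
      have hHint : ∀ x, Integrable (fun u => H (x, u)) (φ x) := by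
        intro x
        refine (integrable_const (ρ ^ (n+1) * Mψ / mψ)).mono'
          ((hHm.measurable.comp measurable_prodMk_left).aestronglyMeasurable)
          (ae_of_all _ fun u => ?_)
        rw [Real.norm_eq_abs, abs_of_nonneg (le_trans (by positivity) (hHlow x u))]
        exact (hHup x u).trans (by gcongr; exact hψge x)
      refine ⟨?_, ?_, ?_⟩
      · have hsm : StronglyMeasurable fun x => ∫ u, H (x, u) ∂(φ x) :=
          StronglyMeasurable.integral_kernel_prod_right (κ := φ) (f := fun x u => H (x, u)) hHm
        have h2 : (Tcontrol r p φ)^[n+1] (fun _ => (1:ℝ)) = fun x => ∫ u, H (x, u) ∂(φ x) :=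
          funext hiter
        rw [h2]
        exact hsm.measurable
      · intro x
        rw [hiter x]
        have hmono := integral_mono (μ := φ x) (integrable_const (ε₀ ^ (n+1))) (hHint x)
          (fun u => hHlow x u)
        rw [integral_const] at hmono
        simpa [measure_univ] using hmono
      · intro x
        rw [hiter x]
        have hmono := integral_mono (μ := φ x) (hHint x) (integrable_const (ρ ^ (n+1) * ψ x / mψ))
          (fun u => hHup x u)
        rw [integral_const] at hmono
        simpa [measure_univ] using hmono
  -- the optimal selector
  obtain ⟨sel, hsel_meas, hsel⟩ := exists_meas_argmax Gψ hGψc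
  have hGs : ∀ x, Gψ (x, sel x) = ρ * ψ x := by
    intro x
    refine le_antisymm (hGle x (sel x)) ?_
    rw [← hsup x]
    exact ciSup_le fun u => hsel x u
  set φ₀ : Kernel S U := Kernel.deterministic sel hsel_meas with hφ₀def
  haveI hφ₀M : IsMarkovKernel φ₀ := Kernel.isMarkovKernel_deterministic hsel_meas
  have hiter0 : ∀ (g : S → ℝ) (x : S), Tcontrol r p φ₀ g x
      = ∫ y, Real.exp (r x (sel x) y) * g y ∂(p x (sel x)) := by
    intro g x
    show ∫ u, ∫ y, Real.exp (r x u y) * g y ∂(p x u) ∂(φ₀ x) = _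
    rw [hφ₀def, Kernel.deterministic_apply, integral_dirac]
  -- lower bound along the optimal selector
  have key0 : ∀ n : ℕ, ∀ x, ρ ^ n * ψ x / Mψ ≤ (Tcontrol r p φ₀)^[n] (fun _ => (1:ℝ)) x := by
    intro n
    induction n with
    | zero =>
      intro x
      simp only [Function.iterate_zero, id_eq, pow_zero, one_mul]
      rw [div_le_one hMψ]
      exact hψge x
    | succ n ih =>
      intro x
      obtain ⟨hm, hlow, hup⟩ := key φ₀ hφ₀M n
      set f := (Tcontrol r p φ₀)^[n] (fun _ => (1:ℝ)) with hfdef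
      have hfnn : ∀ y, 0 ≤ f y := fun y => le_trans (by positivity) (hlow y)
      have hfub : ∀ y, f y ≤ ρ ^ n * Mψ / mψ := fun y => (hup y).trans (by
        gcongr
        exact hψge y)
      rw [Function.iterate_succ_apply', hiter0]
      haveI := hprob x (sel x)
      have hcexp : Continuous fun y : S => Real.exp (r x (sel x) y) :=
        Real.continuous_exp.comp (hr.comp
          (continuous_const.prodMk (continuous_const.prodMk continuous_id)))
      have hint1 : Integrable (fun y => Real.exp (r x (sel x) y) * f y) (p x (sel x)) := by
        refine (integrable_const (E₁ * (ρ ^ n * Mψ / mψ))).mono'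
          (hcexp.measurable.mul hm).aestronglyMeasurable (ae_of_all _ fun y => ?_)
        rw [Real.norm_eq_abs, abs_mul, abs_of_pos (Real.exp_pos _), abs_of_nonneg (hfnn y)]
        exact mul_le_mul (hrhigh x (sel x) y) (hfub y) (hfnn y)
          ((Real.exp_pos _).le.trans (hrhigh x (sel x) y))
      have hint2 : Integrable (fun y => ρ ^ n / Mψ * (Real.exp (r x (sel x) y) * ψ y))
          (p x (sel x)) := (myint (hcexp.mul ψ.continuous) _).const_mul _
      have hmono := integral_mono hint2 hint1 (fun y => by
        calc ρ ^ n / Mψ * (Real.exp (r x (sel x) y) * ψ y)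
            = Real.exp (r x (sel x) y) * (ρ ^ n * ψ y / Mψ) := by ring
          _ ≤ Real.exp (r x (sel x) y) * f y := by
              have := ih y
              gcongr)
      rw [integral_const_mul] at hmono
      calc ρ ^ (n+1) * ψ x / Mψ = ρ ^ n / Mψ * (ρ * ψ x) := by ring
        _ = ρ ^ n / Mψ * Gψ (x, sel x) := by rw [hGs x]
        _ ≤ ∫ y, Real.exp (r x (sel x) y) * f y ∂(p x (sel x)) := hmono
  -- the value along φ₀ converges to log ρ
  have hlim0 : ∀ x : S, Tendsto
      (fun n : ℕ => (1 / (n : ℝ)) * Real.log ((Tcontrol r p φ₀)^[n] (fun _ => (1:ℝ)) x)) atTop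
      (𝓝 (Real.log ρ)) := by
    intro x
    have hconst : ∀ C : ℝ, Tendsto (fun n : ℕ => Real.log ρ + (1 / (n : ℝ)) * C) atTop
        (𝓝 (Real.log ρ)) := by
      intro C
      have h0 : Tendsto (fun n : ℕ => (1 / (n : ℝ)) * C) atTop (𝓝 0) := by
        simpa using tendsto_one_div_atTop_nhds_zero_nat.mul_const C
      simpa using tendsto_const_nhds.add h0
    apply tendsto_of_tendsto_of_tendsto_of_le_of_le'
      (hconst (Real.log (ψ x / Mψ))) (hconst (Real.log (ψ x / mψ)))
    · filter_upwards [eventually_ge_atTop 1] with n hn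
      have hnR : (0:ℝ) < (n : ℝ) := by exact_mod_cast hn
      have hposL : 0 < ρ ^ n * ψ x / Mψ := div_pos (mul_pos (pow_pos hρ _) (hψ x)) hMψ
      have hlog := Real.log_le_log hposL (key0 n x)
      have hlogL : Real.log (ρ ^ n * ψ x / Mψ) = n * Real.log ρ + Real.log (ψ x / Mψ) := by
        rw [mul_div_assoc, Real.log_mul (pow_ne_zero _ hρ.ne') (div_pos (hψ x) hMψ).ne', Real.log_pow]
      rw [hlogL] at hlog
      have := mul_le_mul_of_nonneg_left hlog (by positivity : (0:ℝ) ≤ 1 / (n:ℝ))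
      calc Real.log ρ + 1 / (n:ℝ) * Real.log (ψ x / Mψ)
          = 1 / (n:ℝ) * ((n:ℝ) * Real.log ρ + Real.log (ψ x / Mψ)) := by
            field_simp
          _ ≤ 1 / (n:ℝ) * Real.log ((Tcontrol r p φ₀)^[n] (fun _ => (1:ℝ)) x) := this
    · filter_upwards [eventually_ge_atTop 1] with n hn
      have hnR : (0:ℝ) < (n : ℝ) := by exact_mod_cast hn
      obtain ⟨-, hlow, hup⟩ := key φ₀ hφ₀M n
      have hpos : 0 < (Tcontrol r p φ₀)^[n] (fun _ => (1:ℝ)) x :=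
        lt_of_lt_of_le (by positivity) (hlow x)
      have hlog := Real.log_le_log hpos (hup x)
      have hlogU : Real.log (ρ ^ n * ψ x / mψ) = n * Real.log ρ + Real.log (ψ x / mψ) := by
        rw [mul_div_assoc, Real.log_mul (pow_ne_zero _ hρ.ne') (div_pos (hψ x) hmψ).ne', Real.log_pow]
      rw [hlogU] at hlog
      have := mul_le_mul_of_nonneg_left hlog (by positivity : (0:ℝ) ≤ 1 / (n:ℝ))
      calc 1 / (n:ℝ) * Real.log ((Tcontrol r p φ₀)^[n] (fun _ => (1:ℝ)) x)
          ≤ 1 / (n:ℝ) * ((n:ℝ) * Real.log ρ + Real.log (ψ x / mψ)) := this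
        _ = Real.log ρ + 1 / (n:ℝ) * Real.log (ψ x / mψ) := by field_simp
  constructor
  · -- membership
    refine ⟨φ₀, hφ₀M, ?_⟩
    rw [Real.log_exp]
    have : (⨆ x : S, limsup (fun n : ℕ => (1 / (n : ℝ)) *
        Real.log ((Tcontrol r p φ₀)^[n] (fun _ => 1) x)) atTop) = ⨆ _x : S, Real.log ρ := by
      congr 1
      funext x
      exact (hlim0 x).limsup_eq
    rw [this, ciSup_const]
  · -- upper bound
    rintro c ⟨φ, hφ, rfl⟩
    rw [Real.log_exp]
    apply ciSup_le
    intro x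
    haveI := hφ
    set a : ℕ → ℝ := fun n => (1 / (n : ℝ)) *
      Real.log ((Tcontrol r p φ)^[n] (fun _ => 1) x) with hadef
    have hbelow : ∀ n, min (Real.log ε₀) 0 ≤ a n := by
      intro n
      rcases Nat.eq_zero_or_pos n with rfl | hn
      · simp [hadef]
      · have hnR : (0:ℝ) < (n : ℝ) := by exact_mod_cast hn
        obtain ⟨-, hlow, -⟩ := key φ hφ n
        have hpos : (0:ℝ) < ε₀ ^ n := by positivity
        have hlog := Real.log_le_log hpos (hlow x)
        rw [Real.log_pow] at hlog
        have h2 := mul_le_mul_of_nonneg_left hlog (by positivity : (0:ℝ) ≤ 1 / (n:ℝ))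
        have h3 : 1 / (n:ℝ) * ((n:ℝ) * Real.log ε₀) = Real.log ε₀ := by field_simp
        rw [h3] at h2
        exact le_trans (min_le_left _ _) h2
    have hb : Tendsto (fun n : ℕ => Real.log ρ + (1 / (n : ℝ)) * Real.log (Mψ / mψ)) atTop
        (𝓝 (Real.log ρ)) := by
      have h0 : Tendsto (fun n : ℕ => (1 / (n : ℝ)) * Real.log (Mψ / mψ)) atTop (𝓝 0) := by
        simpa using tendsto_one_div_atTop_nhds_zero_nat.mul_const (Real.log (Mψ / mψ))
      simpa using tendsto_const_nhds.add h0
    have hle : ∀ᶠ n in atTop, a n ≤ Real.log ρ + (1 / (n : ℝ)) * Real.log (Mψ / mψ) := by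
      filter_upwards [eventually_ge_atTop 1] with n hn
      have hnR : (0:ℝ) < (n : ℝ) := by exact_mod_cast hn
      obtain ⟨-, hlow, hup⟩ := key φ hφ n
      have hpos : 0 < (Tcontrol r p φ)^[n] (fun _ => (1:ℝ)) x :=
        lt_of_lt_of_le (by positivity) (hlow x)
      have hub2 : (Tcontrol r p φ)^[n] (fun _ => (1:ℝ)) x ≤ ρ ^ n * Mψ / mψ :=
        (hup x).trans (by gcongr; exact hψge x)
      have hlog := Real.log_le_log hpos hub2
      have hlogU : Real.log (ρ ^ n * Mψ / mψ) = n * Real.log ρ + Real.log (Mψ / mψ) := by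
        rw [mul_div_assoc, Real.log_mul (pow_ne_zero _ hρ.ne') (div_pos hMψ hmψ).ne', Real.log_pow]
      rw [hlogU] at hlog
      have h2 := mul_le_mul_of_nonneg_left hlog (by positivity : (0:ℝ) ≤ 1 / (n:ℝ))
      calc a n ≤ 1 / (n:ℝ) * ((n:ℝ) * Real.log ρ + Real.log (Mψ / mψ)) := h2
        _ = Real.log ρ + 1 / (n:ℝ) * Real.log (Mψ / mψ) := by field_simp
    calc limsup a atTop
        ≤ limsup (fun n : ℕ => Real.log ρ + (1 / (n : ℝ)) * Real.log (Mψ / mψ)) atTop :=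
          limsup_le_limsup hle (isCoboundedUnder_le_of_le atTop hbelow) hb.isBoundedUnder_le
      _ = Real.log ρ := hb.limsup_eq
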